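/- arXiv:1011.1587 — 6 statements merged into one kernel-verified Lean document; each statement's English description precedes it below -/
import Mathlib

section
/- The map γ satisfies the group 2-cocycle relation γ(x, y+z) · γ(y, z) = γ(x+y, z) · γ(x, y) in Adj(A(M,T)) for all x, y, z ∈ M. -/
/-!
Common setup: the adjoint group of the Alexander quandle `A(M,T)` (F.J.-B.J. Clauwens,
"The adjoint group of an Alexander quandle").

For an abelian group `M` with automorphism `T`, the Alexander quandle `A(M,T)` is `M` with
`y * x = T y + x - T x`, and the adjoint group `Adj(A(M,T))` is presented with generators
`e x` for `x : M` and relations `e (y * x) = (e x)⁻¹ * e y * e x`.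
-/

open scoped TensorProduct

namespace Clauwens

variable {M : Type*} [AddCommGroup M]

/-- The relations of the adjoint group of the Alexander quandle `A(M,T)`:
for each `x y : M`, the relation `e_{y*x} = e_x⁻¹ * e_y * e_x`, where `y*x = T y + x - T x`. -/
def rels (T : M ≃+ M) : Set (FreeGroup M) :=
  {r | ∃ x y : M, r = FreeGroup.of (T y + x - T x) *
      ((FreeGroup.of x)⁻¹ * FreeGroup.of y * FreeGroup.of x)⁻¹}

/-- The adjoint group `Adj(A(M,T))` of the Alexander quandle. -/
abbrev Adj (T : M ≃+ M) : Type _ := PresentedGroup (rels T)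

/-- The generator `e_x` of the adjoint group. -/
def e (T : M ≃+ M) (x : M) : Adj T := PresentedGroup.of x

/-- The quandle automorphism `p ↦ p * x = T p + x - T x` of `A(M,T)`. -/
def σ (T : M ≃+ M) (x : M) : Equiv.Perm M where
  toFun p := T p + (x - T x)
  invFun p := T.symm (p - (x - T x))
  left_inv p := by simp
  right_inv p := by simp

lemma σ_apply (T : M ≃+ M) (x p : M) : σ T x p = T p + (x - T x) := rfl

lemma σ_inv_apply (T : M ≃+ M) (x p : M) : (σ T x)⁻¹ p = T.symm (p - (x - T x)) := rfl

lemma σ_rel (T : M ≃+ M) (x y : M) :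
    σ T x * σ T y * (σ T x)⁻¹ = σ T (T y + x - T x) := by
  ext p
  simp only [Equiv.Perm.mul_apply, σ_apply, σ_inv_apply, map_add, map_sub,
    AddEquiv.apply_symm_apply]
  abel

/-- The homomorphism `ρ` from the adjoint group to the group of quandle automorphisms of
`A(M,T)` acting on the right of `M` (hence the `ᵐᵒᵖ`), induced by the right action
`p · e_x = p * x = T p + x - T x`; the automorphism by which `g` acts is `(ρ T g).unop`. -/
def ρ (T : M ≃+ M) : Adj T →* (Equiv.Perm M)ᵐᵒᵖ :=
  PresentedGroup.toGroup (f := fun x => MulOpposite.op (σ T x)) (by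
    rintro r ⟨x, y, rfl⟩
    simp only [map_mul, map_inv, FreeGroup.lift_apply_of, ← MulOpposite.op_inv, ← MulOpposite.op_mul,
      mul_inv_rev, inv_inv]
    rw [MulOpposite.op_eq_one_iff, ← σ_rel T x y]
    group)

/-- `γ(x,y) = e_0⁻¹ e_{x+y} e_y⁻¹ e_0 e_x⁻¹ e_0`, so that
`e_0⁻¹ e_{x+y} = γ(x,y) e_0⁻¹ e_x e_0⁻¹ e_y`. -/
def γ (T : M ≃+ M) (x y : M) : Adj T :=
  (e T 0)⁻¹ * e T (x + y) * (e T y)⁻¹ * e T 0 * (e T x)⁻¹ * e T 0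

/-- `λ(x,y) = γ(y,x)⁻¹ γ(x,y)`. -/
def lam (T : M ≃+ M) (x y : M) : Adj T := (γ T y x)⁻¹ * γ T x y

/-- The additive endomorphism `τ` of `M ⊗_ℤ M` with `τ(x ⊗ y) = T y ⊗ x`. -/
noncomputable def τmap (T : M ≃+ M) : M ⊗[ℤ] M →ₗ[ℤ] M ⊗[ℤ] M :=
  (TensorProduct.comm ℤ M M).toLinearMap ∘ₗ
    (LinearMap.lTensor M T.toAddMonoidHom.toIntLinearMap)

lemma τmap_tmul (T : M ≃+ M) (x y : M) : τmap T (x ⊗ₜ[ℤ] y) = T y ⊗ₜ[ℤ] x := rfl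

/-- `S(M,T) = coker(1 - τ) = (M ⊗_ℤ M)/im(1 - τ)`. -/
abbrev S (T : M ≃+ M) : Type _ :=
  (M ⊗[ℤ] M) ⧸ LinearMap.range (LinearMap.id - τmap T)

/-- The class `[x ⊗ y]` in `S(M,T)`. -/
noncomputable def cls (T : M ≃+ M) (x y : M) : S T := Submodule.Quotient.mk (x ⊗ₜ[ℤ] y)

lemma mk_τmap (T : M ≃+ M) (w : M ⊗[ℤ] M) :
    (Submodule.Quotient.mk (τmap T w) : S T) = Submodule.Quotient.mk w := by
  rw [Submodule.Quotient.eq]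
  exact ⟨-w, by simp [LinearMap.sub_apply]; abel⟩

lemma cls_T (T : M ≃+ M) (x y : M) : cls T (T x) (T y) = cls T x y := by
  have h1 : cls T (T x) (T y) = Submodule.Quotient.mk (τmap T (T y ⊗ₜ[ℤ] x)) := rfl
  have h2 : (Submodule.Quotient.mk (T y ⊗ₜ[ℤ] x) : S T)
      = Submodule.Quotient.mk (τmap T (x ⊗ₜ[ℤ] y)) := rfl
  rw [h1, mk_τmap, h2, mk_τmap]; rfl

lemma cls_add_left (T : M ≃+ M) (x x' y : M) :
    cls T (x + x') y = cls T x y + cls T x' y := by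
  simp only [cls, ← Submodule.Quotient.mk_add, TensorProduct.add_tmul]

lemma cls_add_right (T : M ≃+ M) (x y y' : M) :
    cls T x (y + y') = cls T x y + cls T x y' := by
  simp only [cls, ← Submodule.Quotient.mk_add, TensorProduct.tmul_add]

lemma cls_neg_left (T : M ≃+ M) (x y : M) : cls T (-x) y = -cls T x y := by
  simp only [cls, ← Submodule.Quotient.mk_neg, TensorProduct.neg_tmul]

lemma cls_zero_left (T : M ≃+ M) (y : M) : cls T 0 y = 0 := by
  simp [cls, TensorProduct.zero_tmul]

lemma cls_zero_right (T : M ≃+ M) (x : M) : cls T x 0 = 0 := by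
  simp [cls, TensorProduct.tmul_zero]

/-- `T^m` for `m : ℤ`. -/
def Tz (T : M ≃+ M) (m : ℤ) : M ≃+ M := (m • T : AddAut M)

lemma Tz_zero (T : M ≃+ M) (x : M) : Tz T 0 x = x := rfl

lemma Tz_one (T : M ≃+ M) (x : M) : Tz T 1 x = T x := by simp [Tz]

lemma Tz_add (T : M ≃+ M) (m n : ℤ) (x : M) : Tz T (m + n) x = Tz T m (Tz T n x) := by
  simp [Tz, add_zsmul, AddAut.add_apply]

lemma cls_Tz_shift (T : M ≃+ M) (m : ℤ) (x y : M) :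
    cls T (Tz T (m + 1) x) (Tz T (m + 1) y) = cls T (Tz T m x) (Tz T m y) := by
  have h : ∀ z : M, Tz T (m + 1) z = T (Tz T m z) := by
    intro z; rw [add_comm, Tz_add, Tz_one]
  rw [h, h, cls_T]

lemma cls_Tz (T : M ≃+ M) (m : ℤ) (x y : M) :
    cls T (Tz T m x) (Tz T m y) = cls T x y := by
  induction m using Int.induction_on with
  | zero => rfl
  | succ i ih => rw [cls_Tz_shift, ih]
  | pred i ih =>
      have h := cls_Tz_shift T (-(i : ℤ) - 1) x y
      rw [sub_add_cancel] at h
      rw [← h, ih]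

/-- `F(M,T)` is the set `ℤ × M × S(M,T)` equipped with the multiplication
`(k, x, α)(m, y, β) = (k + m, T^m x + y, α + β + [T^m x ⊗ y])`. -/
abbrev F (T : M ≃+ M) : Type _ := ℤ × M × S T

noncomputable instance (T : M ≃+ M) : Group (F T) where
  mul g h := (g.1 + h.1, Tz T h.1 g.2.1 + h.2.1, g.2.2 + h.2.2 + cls T (Tz T h.1 g.2.1) h.2.1)
  one := ((0 : ℤ), (0 : M), (0 : S T))
  inv g := (-g.1, -(Tz T (-g.1) g.2.1), -g.2.2 + cls T g.2.1 g.2.1)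
  mul_assoc g h k := by
    obtain ⟨a, x, α⟩ := g; obtain ⟨b, y, β⟩ := h; obtain ⟨c, z, δ⟩ := k
    refine Prod.ext (add_assoc a b c) (Prod.ext ?_ ?_)
    · show Tz T c (Tz T b x + y) + z = Tz T (b + c) x + (Tz T c y + z)
      rw [add_comm b c, Tz_add, map_add]
      abel
    · show α + β + cls T (Tz T b x) y + δ + cls T (Tz T c (Tz T b x + y)) z
        = α + (β + δ + cls T (Tz T c y) z) + cls T (Tz T (b + c) x) (Tz T c y + z)
      rw [add_comm b c, Tz_add, map_add, cls_add_left, cls_add_right]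
      have h1 : cls T (Tz T c (Tz T b x)) (Tz T c y) = cls T (Tz T b x) y := cls_Tz T c _ _
      rw [h1]
      abel
  one_mul g := by
    obtain ⟨a, x, α⟩ := g
    refine Prod.ext (zero_add a) (Prod.ext ?_ ?_)
    · show Tz T a 0 + x = x
      rw [map_zero, zero_add]
    · show 0 + α + cls T (Tz T a 0) x = α
      rw [map_zero, cls_zero_left, zero_add, add_zero]
  mul_one g := by
    obtain ⟨a, x, α⟩ := g
    refine Prod.ext (add_zero a) (Prod.ext ?_ ?_)
    · show Tz T 0 x + 0 = x
      rw [Tz_zero, add_zero]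
    · show α + 0 + cls T (Tz T 0 x) 0 = α
      rw [cls_zero_right, add_zero, add_zero]
  inv_mul_cancel g := by
    obtain ⟨a, x, α⟩ := g
    have hx : Tz T a (Tz T (-a) x) = x := by
      rw [← Tz_add, add_neg_cancel, Tz_zero]
    refine Prod.ext (neg_add_cancel a) (Prod.ext ?_ ?_)
    · show Tz T a (-(Tz T (-a) x)) + x = 0
      rw [map_neg, hx, neg_add_cancel]
    · show -α + cls T x x + α + cls T (Tz T a (-(Tz T (-a) x))) x = 0
      rw [map_neg, hx, cls_neg_left]
      abel

/-- The canonical augmentation `ε : Adj(A(M,T)) → ℤ`, with `ε(e_x) = 1` for all `x`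
(written multiplicatively since `Adj` is a multiplicative group). -/
def ε (T : M ≃+ M) : Adj T →* Multiplicative ℤ :=
  PresentedGroup.toGroup (f := fun _ => Multiplicative.ofAdd (1 : ℤ)) (by
    rintro r ⟨x, y, rfl⟩
    simp only [map_mul, map_inv, FreeGroup.lift_apply_of]
    group)

/-- The subgroup `F(M,T)⁰` of elements `(0, x, α)` of `F(M,T)`. -/
noncomputable def Fo (T : M ≃+ M) : Subgroup (F T) where
  carrier := {g | g.1 = 0}
  mul_mem' := by
    rintro ⟨a, x, α⟩ ⟨b, y, β⟩ (ha : a = 0) (hb : b = 0)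
    show a + b = 0
    rw [ha, hb, add_zero]
  one_mem' := rfl
  inv_mem' := by
    rintro ⟨a, x, α⟩ (ha : a = 0)
    show -a = 0
    rw [ha, neg_zero]

/-- The fundamental group `π₁(A(M,T), 0)` of the Alexander quandle based at `0 ∈ M`:
the elements of `ker ε` fixing the base point `0`. -/
def pi1 (T : M ≃+ M) : Subgroup (Adj T) where
  carrier := {g | g ∈ (ε T).ker ∧ (ρ T g).unop 0 = 0}
  one_mem' := ⟨(ε T).ker.one_mem, by simp⟩
  mul_mem' := by
    intro a b ha hb
    refine ⟨(ε T).ker.mul_mem ha.1 hb.1, ?_⟩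
    show ((ρ T) (a * b)).unop 0 = 0
    rw [map_mul, MulOpposite.unop_mul, Equiv.Perm.mul_apply, ha.2, hb.2]
  inv_mem' := by
    intro a ha
    refine ⟨(ε T).ker.inv_mem ha.1, ?_⟩
    show ((ρ T) a⁻¹).unop 0 = 0
    rw [map_inv, MulOpposite.unop_inv]
    exact Equiv.Perm.inv_eq_iff_eq.mpr ha.2.symm



lemma rel_e (T : M ≃+ M) (x y : M) :
    (e T x)⁻¹ * e T y * e T x = e T (T y + x - T x) := by
  have hr : (FreeGroup.of (T y + x - T x) *
      ((FreeGroup.of x)⁻¹ * FreeGroup.of y * FreeGroup.of x)⁻¹) ∈ rels T := ⟨x, y, rfl⟩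
  have h1 : (PresentedGroup.mk (rels T)) (FreeGroup.of (T y + x - T x) *
      ((FreeGroup.of x)⁻¹ * FreeGroup.of y * FreeGroup.of x)⁻¹) = 1 :=
    (QuotientGroup.eq_one_iff _).mpr (Subgroup.subset_normalClosure hr)
  simp only [map_mul, map_inv] at h1
  have h2 := mul_eq_one_iff_eq_inv.mp h1
  rw [inv_inv] at h2
  exact h2.symm

lemma e_zero_conj (T : M ≃+ M) (p : M) :
    e T 0 * e T p * (e T 0)⁻¹ = e T (T.symm p) := by
  have := rel_e T 0 (T.symm p)
  simp only [map_zero, add_zero, sub_zero, AddEquiv.apply_symm_apply] at this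
  rw [← this]
  group

/-- `h x = e_0⁻¹ e_x`. -/
def hh (T : M ≃+ M) (x : M) : Adj T := (e T 0)⁻¹ * e T x

lemma hh_conj (T : M ≃+ M) (x p : M) :
    (hh T x)⁻¹ * e T p * hh T x = e T (p + x - T x) := by
  have h1 : (hh T x)⁻¹ * e T p * hh T x
      = (e T x)⁻¹ * (e T 0 * e T p * (e T 0)⁻¹) * e T x := by
    unfold hh; group
  rw [h1, e_zero_conj, rel_e]
  congr 1
  rw [AddEquiv.apply_symm_apply]

lemma hh_conj_pair (T : M ≃+ M) (w a b : M) :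
    (hh T w)⁻¹ * ((e T a)⁻¹ * e T b) * hh T w
      = (e T (a + w - T w))⁻¹ * e T (b + w - T w) := by
  have h1 : (hh T w)⁻¹ * ((e T a)⁻¹ * e T b) * hh T w
      = ((hh T w)⁻¹ * e T a * hh T w)⁻¹ * ((hh T w)⁻¹ * e T b * hh T w) := by group
  rw [h1, hh_conj, hh_conj]

lemma key (T : M ≃+ M) (x y z : M) :
    (hh T (y + z))⁻¹ * (hh T x)⁻¹ * hh T (y + z)
      = (hh T z)⁻¹ * ((hh T y)⁻¹ * (hh T x)⁻¹ * hh T y) * hh T z := by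
  have hx : (hh T x)⁻¹ = (e T x)⁻¹ * e T 0 := by unfold hh; group
  have L : (hh T (y + z))⁻¹ * (hh T x)⁻¹ * hh T (y + z)
      = (e T (x + (y + z) - T (y + z)))⁻¹ * e T (0 + (y + z) - T (y + z)) := by
    rw [hx]
    exact hh_conj_pair T (y + z) x 0
  have R1 : (hh T y)⁻¹ * (hh T x)⁻¹ * hh T y
      = (e T (x + y - T y))⁻¹ * e T (0 + y - T y) := by
    rw [hx]
    have := hh_conj_pair T y x 0
    rw [← mul_assoc] at this
    exact this
  have R2 : (hh T z)⁻¹ * ((e T (x + y - T y))⁻¹ * e T (0 + y - T y)) * hh T z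
      = (e T (x + y - T y + z - T z))⁻¹ * e T (0 + y - T y + z - T z) :=
    hh_conj_pair T z _ _
  rw [L, R1, R2]
  have e1 : x + (y + z) - T (y + z) = x + y - T y + z - T z := by
    rw [map_add]; abel
  have e2 : 0 + (y + z) - T (y + z) = 0 + y - T y + z - T z := by
    rw [map_add]; abel
  rw [e1, e2]

lemma γ_eq_hh (T : M ≃+ M) (x y : M) :
    γ T x y = hh T (x + y) * (hh T y)⁻¹ * (hh T x)⁻¹ := by
  unfold γ hh
  group

/-- The group 2-cocycle relation `γ(x, y+z) γ(y, z) = γ(x+y, z) γ(x, y)` for all `x y z ∈ M`. -/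
theorem statement3 (T : M ≃+ M) (x y z : M) :
    γ T x (y + z) * γ T y z = γ T (x + y) z * γ T x y := by
  simp only [γ_eq_hh]
  have hk := key T x y z
  have hL : γ T x (y + z) * γ T y z
      = hh T (x + (y + z)) * ((hh T (y + z))⁻¹ * (hh T x)⁻¹ * hh T (y + z))
        * (hh T z)⁻¹ * (hh T y)⁻¹ := by
    simp only [γ_eq_hh]; group
  have hR : γ T (x + y) z * γ T x y
      = hh T (x + y + z) * ((hh T z)⁻¹ * ((hh T y)⁻¹ * (hh T x)⁻¹ * hh T y) * hh T z)
        * (hh T z)⁻¹ * (hh T y)⁻¹ := by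
    simp only [γ_eq_hh]; group
  simp only [γ_eq_hh] at hL hR
  rw [hL, hR, hk, add_assoc]

end Clauwens
end

section
/- For all u, v ∈ M the identity e_u e_v = γ(T u, v)^{-1} e_0 e_{T u + v} holds in Adj(A(M,T)). -/
/-!
Common setup: the adjoint group of the Alexander quandle `A(M,T)` (F.J.-B.J. Clauwens,
"The adjoint group of an Alexander quandle").

For an abelian group `M` with automorphism `T`, the Alexander quandle `A(M,T)` is `M` with
`y * x = T y + x - T x`, and the adjoint group `Adj(A(M,T))` is presented with generators
`e x` for `x : M` and relations `e (y * x) = (e x)⁻¹ * e y * e x`.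
-/

open scoped TensorProduct

namespace Clauwens

variable {M : Type*} [AddCommGroup M]

lemma e_rel (T : M ≃+ M) (x y : M) :
    e T (T y + x - T x) = (e T x)⁻¹ * e T y * e T x := by
  have h : (QuotientGroup.mk (FreeGroup.of (T y + x - T x) *
      ((FreeGroup.of x)⁻¹ * FreeGroup.of y * FreeGroup.of x)⁻¹) : Adj T) = 1 :=
    (QuotientGroup.eq_one_iff _).mpr (Subgroup.subset_normalClosure ⟨x, y, rfl⟩)
  rw [QuotientGroup.mk_mul, QuotientGroup.mk_inv, mul_inv_eq_one] at h
  exact h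

lemma conj_e_zero (T : M ≃+ M) (x : M) :
    e T 0 * e T x = e T x * e T (x - T x) := by
  have h := e_rel T x 0
  rw [map_zero, zero_add] at h
  rw [h]; group

lemma aux_group {G : Type*} [Group G] (a b z X c : G) (f1 : z * X = X * c)
    (f2 : z * (a * b) = a * b * c) :
    a * b = (z⁻¹ * X * b⁻¹ * z * (z⁻¹ * a * z)⁻¹ * z)⁻¹ * z * X := by
  have h4 : z * (z * X) = X * (c * c) := by
    rw [f1, ← mul_assoc, f1, mul_assoc]
  have h5 : z * (z * (a * b)) = a * b * (c * c) := by
    rw [f2, ← mul_assoc, f2, mul_assoc]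
  have key : (z⁻¹ * X * b⁻¹ * z * (z⁻¹ * a * z)⁻¹ * z)⁻¹ * z * X
      = z⁻¹ * (z⁻¹ * (a * b * (X⁻¹ * (z * (z * X))))) := by group
  rw [key, h4, inv_mul_cancel_left, ← h5]
  group

/-- `e_u e_v = γ(T u, v)⁻¹ e_0 e_{T u + v}` for all `u v ∈ M`. -/
theorem statement4 (T : M ≃+ M) (u v : M) :
    e T u * e T v = (γ T (T u) v)⁻¹ * e T 0 * e T (T u + v) := by
  have hTu : e T (T u) = (e T 0)⁻¹ * e T u * e T 0 := by
    have h := e_rel T 0 u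
    rw [map_zero, add_zero, sub_zero] at h
    exact h
  have f1 : e T 0 * e T (T u + v) =
      e T (T u + v) * e T (T u + v - T (T u + v)) := conj_e_zero T _
  have f2 : e T 0 * (e T u * e T v) =
      e T u * e T v * e T (T u + v - T (T u + v)) := by
    have h1 : e T 0 * e T u = e T u * e T (u - T u) := conj_e_zero T u
    have h2 : e T (T (u - T u) + v - T v) = (e T v)⁻¹ * e T (u - T u) * e T v :=
      e_rel T v (u - T u)
    have harg : T (u - T u) + v - T v = T u + v - T (T u + v) := by
      simp only [map_add, map_sub]; abel
    rw [harg] at h2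
    rw [← mul_assoc, h1, mul_assoc, mul_assoc]
    congr 1
    rw [h2]; group
  rw [γ, hTu]
  exact aux_group (e T u) (e T v) (e T 0) (e T (T u + v))
    (e T (T u + v - T (T u + v))) f1 f2

end Clauwens
end

section
/- The map λ : M × M → Adj(A(M,T)) defined by λ(x,y) = γ(y,x)^{-1} γ(x,y) equals the commutator [e_0^{-1} e_y, e_0^{-1} e_x] = (e_0^{-1} e_y)^{-1} (e_0^{-1} e_x)^{-1} (e_0^{-1} e_y)(e_0^{-1} e_x), and it satisfies λ(u, v) = γ(v − T v, u)^{-1} for all u, v ∈ M. -/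
/-!
Common setup: the adjoint group of the Alexander quandle `A(M,T)` (F.J.-B.J. Clauwens,
"The adjoint group of an Alexander quandle").

For an abelian group `M` with automorphism `T`, the Alexander quandle `A(M,T)` is `M` with
`y * x = T y + x - T x`, and the adjoint group `Adj(A(M,T))` is presented with generators
`e x` for `x : M` and relations `e (y * x) = (e x)⁻¹ * e y * e x`.
-/

open scoped TensorProduct

namespace Clauwens

variable {M : Type*} [AddCommGroup M]

/-- `aa z = e₀⁻¹ e_z`. -/
def aa (T : M ≃+ M) (z : M) : Adj T := (e T 0)⁻¹ * e T z

lemma aa_zero (T : M ≃+ M) : aa T 0 = 1 := inv_mul_cancel _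

/-- Conjugation by `e₀`: `e_{Ty} = e₀⁻¹ e_y e₀`. -/
lemma e_T (T : M ≃+ M) (y : M) : e T (T y) = (e T 0)⁻¹ * e T y * e T 0 := by
  have h := e_rel T 0 y
  simpa using h

/-- `e₀ e_z e₀⁻¹ = e_{T⁻¹ z}`. -/
lemma e_conj_inv (T : M ≃+ M) (z : M) :
    e T 0 * e T z * (e T 0)⁻¹ = e T (T.symm z) := by
  have h := e_T T (T.symm z)
  rw [T.apply_symm_apply] at h
  rw [h]; group

/-- Key relation: `(aa (Tx))⁻¹ * aa z * aa x = aa (z + x - T x)`. -/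
lemma aa_rel (T : M ≃+ M) (x z : M) :
    (aa T (T x))⁻¹ * aa T z * aa T x = aa T (z + x - T x) := by
  have hTx : e T (T x) = (e T 0)⁻¹ * e T x * e T 0 := e_T T x
  have hz : e T 0 * e T z * (e T 0)⁻¹ = e T (T.symm z) := e_conj_inv T z
  have hr : e T (T (T.symm z) + x - T x) = (e T x)⁻¹ * e T (T.symm z) * e T x :=
    e_rel T x (T.symm z)
  rw [T.apply_symm_apply] at hr
  show ((e T 0)⁻¹ * e T (T x))⁻¹ * ((e T 0)⁻¹ * e T z) * ((e T 0)⁻¹ * e T x)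
      = (e T 0)⁻¹ * e T (z + x - T x)
  rw [hr, ← hz, hTx]
  group

lemma aa_mul (T : M ≃+ M) (x z : M) :
    aa T z * aa T x = aa T (T x) * aa T (z + x - T x) := by
  rw [← aa_rel T x z]; group

lemma aa_sub (T : M ≃+ M) (x : M) :
    aa T (x - T x) = (aa T (T x))⁻¹ * aa T x := by
  have h := aa_rel T x 0
  rw [aa_zero, zero_add] at h
  rw [← h]; group

/-- Conjugation of `aa z` by `aa p`. -/
lemma aa_conj (T : M ≃+ M) (p z : M) :
    (aa T p)⁻¹ * aa T z * aa T p = (aa T (p - T p))⁻¹ * aa T (z + (p - T p)) := by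
  have h1 := aa_rel T p z
  have h2 := aa_sub T p
  have : (aa T p)⁻¹ * aa T z * aa T p
      = ((aa T (T p))⁻¹ * aa T p)⁻¹ * ((aa T (T p))⁻¹ * aa T z * aa T p) := by group
  rw [this, h1, ← h2, add_sub_assoc]


/-- `cc x y = aa (x+y) * (aa y)⁻¹ * (aa x)⁻¹`, which is `γ x y`. -/
def cc (T : M ≃+ M) (x y : M) : Adj T := aa T (x + y) * (aa T y)⁻¹ * (aa T x)⁻¹

lemma γ_eq_cc (T : M ≃+ M) (x y : M) : γ T x y = cc T x y := by
  show (e T 0)⁻¹ * e T (x + y) * (e T y)⁻¹ * e T 0 * (e T x)⁻¹ * e T 0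
      = ((e T 0)⁻¹ * e T (x + y)) * ((e T 0)⁻¹ * e T y)⁻¹ * ((e T 0)⁻¹ * e T x)⁻¹
  group

/-- Conjugation of `aa w` by a product `aa x * aa y`, versus by `aa (x+y)`. -/
lemma aa_conj_mul (T : M ≃+ M) (x y w : M) :
    (aa T x * aa T y)⁻¹ * aa T w * (aa T x * aa T y)
      = (aa T ((x - T x) + (y - T y)))⁻¹ * aa T (w + ((x - T x) + (y - T y))) := by
  have h1 : (aa T x * aa T y)⁻¹ * aa T w * (aa T x * aa T y)
      = (aa T y)⁻¹ * ((aa T x)⁻¹ * aa T w * aa T x) * aa T y := by group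
  rw [h1, aa_conj T x w]
  have h2 : (aa T y)⁻¹ * ((aa T (x - T x))⁻¹ * aa T (w + (x - T x))) * aa T y
      = ((aa T y)⁻¹ * aa T (x - T x) * aa T y)⁻¹ *
        ((aa T y)⁻¹ * aa T (w + (x - T x)) * aa T y) := by group
  rw [h2, aa_conj T y (x - T x), aa_conj T y (w + (x - T x))]
  have h3 : x - T x + (y - T y) = w + (x - T x) + (y - T y) - (w + (x - T x) + (y - T y)) +
      (x - T x + (y - T y)) := by abel
  group
  rw [add_assoc]

/-- `cc x y` commutes with every `aa w`. -/
lemma cc_comm_aa (T : M ≃+ M) (x y w : M) : Commute (cc T x y) (aa T w) := by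
  have hs : (x + y) - T (x + y) = (x - T x) + (y - T y) := by
    rw [map_add]; abel
  have h1 : (aa T (x + y))⁻¹ * aa T w * aa T (x + y)
      = (aa T x * aa T y)⁻¹ * aa T w * (aa T x * aa T y) := by
    rw [aa_conj_mul, aa_conj T (x + y) w, hs]
  have h2 : aa T w * (aa T (x + y) * (aa T x * aa T y)⁻¹)
      = (aa T (x + y) * (aa T x * aa T y)⁻¹) * aa T w := by
    have := h1
    calc aa T w * (aa T (x + y) * (aa T x * aa T y)⁻¹)
        = aa T (x + y) * ((aa T (x + y))⁻¹ * aa T w * aa T (x + y)) * (aa T x * aa T y)⁻¹ := by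
          group
      _ = aa T (x + y) * ((aa T x * aa T y)⁻¹ * aa T w * (aa T x * aa T y)) *
            (aa T x * aa T y)⁻¹ := by rw [h1]
      _ = (aa T (x + y) * (aa T x * aa T y)⁻¹) * aa T w := by group
  have h3 : cc T x y = aa T (x + y) * (aa T x * aa T y)⁻¹ := by
    show aa T (x + y) * (aa T y)⁻¹ * (aa T x)⁻¹ = _
    group
  rw [h3]
  exact (h2.symm)

lemma cc_comm_cc (T : M ≃+ M) (x y u v : M) : Commute (cc T x y) (cc T u v) := by
  have h : cc T u v = aa T (u + v) * (aa T v)⁻¹ * (aa T u)⁻¹ := rfl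
  rw [h]
  exact ((cc_comm_aa T x y (u + v)).mul_right
    ((cc_comm_aa T x y v).inv_right)).mul_right ((cc_comm_aa T x y u).inv_right)

lemma aa_add (T : M ≃+ M) (x y : M) : aa T (x + y) = cc T x y * aa T x * aa T y := by
  show aa T (x + y) = aa T (x + y) * (aa T y)⁻¹ * (aa T x)⁻¹ * aa T x * aa T y
  group

/-- The commutator formula: `aa u * aa v * (aa u)⁻¹ * (aa v)⁻¹ = (cc u v)⁻¹ * cc v u`. -/
lemma aa_commutator (T : M ≃+ M) (u v : M) :
    aa T u * aa T v * (aa T u)⁻¹ * (aa T v)⁻¹ = (cc T u v)⁻¹ * cc T v u := by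
  have h1 : aa T (u + v) = cc T u v * aa T u * aa T v := aa_add T u v
  have h2 : aa T (u + v) = cc T v u * aa T v * aa T u := by
    rw [add_comm u v]; exact aa_add T v u
  have h3 : cc T u v * aa T u * aa T v = cc T v u * aa T v * aa T u := by rw [← h1, ← h2]
  calc aa T u * aa T v * (aa T u)⁻¹ * (aa T v)⁻¹
      = (cc T u v)⁻¹ * (cc T u v * aa T u * aa T v) * (aa T u)⁻¹ * (aa T v)⁻¹ := by group
    _ = (cc T u v)⁻¹ * (cc T v u * aa T v * aa T u) * (aa T u)⁻¹ * (aa T v)⁻¹ := by rw [h3]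
    _ = (cc T u v)⁻¹ * cc T v u * (aa T v * (aa T v)⁻¹) := by group
    _ = (cc T u v)⁻¹ * cc T v u := by group

/-- `λ(x,y) = γ(y,x)⁻¹ γ(x,y)` equals the commutator
`[e_0⁻¹ e_y, e_0⁻¹ e_x] = (e_0⁻¹ e_y)⁻¹ (e_0⁻¹ e_x)⁻¹ (e_0⁻¹ e_y)(e_0⁻¹ e_x)`,
and `λ(u, v) = γ(v - T v, u)⁻¹` for all `u v ∈ M`. -/
theorem statement6 (T : M ≃+ M) :
    (∀ x y : M, lam T x y =
      ((e T 0)⁻¹ * e T y)⁻¹ * ((e T 0)⁻¹ * e T x)⁻¹ *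
        ((e T 0)⁻¹ * e T y) * ((e T 0)⁻¹ * e T x)) ∧
    (∀ u v : M, lam T u v = (γ T (v - T v) u)⁻¹) := by
  have lam_eq : ∀ x y : M, lam T x y = (cc T y x)⁻¹ * cc T x y := by
    intro x y
    show (γ T y x)⁻¹ * γ T x y = _
    rw [γ_eq_cc, γ_eq_cc]
  constructor
  · intro x y
    have h : ((e T 0)⁻¹ * e T y)⁻¹ * ((e T 0)⁻¹ * e T x)⁻¹ *
        ((e T 0)⁻¹ * e T y) * ((e T 0)⁻¹ * e T x)
        = (aa T y)⁻¹ * (aa T x)⁻¹ * aa T y * aa T x := rfl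
    rw [h, lam_eq]
    symm
    -- (aa y)⁻¹ (aa x)⁻¹ (aa y) (aa x) = (cc y x)⁻¹ cc x y
    -- from aa y aa x = (cc y x) aa ... : use commutator lemma on inverses
    have h1 := aa_commutator T y x   -- aa y aa x (aa y)⁻¹ (aa x)⁻¹ = (cc y x)⁻¹ cc x y
    -- Let P = aa y, Q = aa x, C = (cc y x)⁻¹ cc x y (central w.r.t. aa's).
    -- h1: P Q P⁻¹ Q⁻¹ = C, want P⁻¹ Q⁻¹ P Q = C.
    have hC1 : Commute ((cc T y x)⁻¹ * cc T x y) (aa T y) :=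
      ((cc_comm_aa T y x (y)).inv_left).mul_left (cc_comm_aa T x y y)
    have hC2 : Commute ((cc T y x)⁻¹ * cc T x y) (aa T x) :=
      ((cc_comm_aa T y x (x)).inv_left).mul_left (cc_comm_aa T x y x)
    -- from h1 : P * Q = C * Q * P ... derive
    have hPQ : aa T y * aa T x = ((cc T y x)⁻¹ * cc T x y) * (aa T x * aa T y) := by
      have := h1
      calc aa T y * aa T x
          = (aa T y * aa T x * (aa T y)⁻¹ * (aa T x)⁻¹) * (aa T x * aa T y) := by group
        _ = ((cc T y x)⁻¹ * cc T x y) * (aa T x * aa T y) := by rw [h1]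
    calc (aa T y)⁻¹ * (aa T x)⁻¹ * aa T y * aa T x
        = (aa T x * aa T y)⁻¹ * (aa T y * aa T x) := by group
      _ = (aa T x * aa T y)⁻¹ * (((cc T y x)⁻¹ * cc T x y) * (aa T x * aa T y)) := by rw [hPQ]
      _ = (aa T x * aa T y)⁻¹ * ((aa T x * aa T y) * ((cc T y x)⁻¹ * cc T x y)) := by
          rw [(hC2.mul_right hC1).symm.eq]
      _ = (cc T y x)⁻¹ * cc T x y := by group
  · intro u v
    rw [lam_eq, γ_eq_cc]
    -- goal: (cc v u)⁻¹ * cc u v = (cc (v - Tv) u)⁻¹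
    -- show cc (v - Tv) u = (cc u v)⁻¹ * cc v u
    have key : cc T (v - T v) u = (cc T u v)⁻¹ * cc T v u := by
      have h1 : aa T (v - T v) = (aa T (T v))⁻¹ * aa T v := aa_sub T v
      have h2 : aa T (u + v - T v) = (aa T (T v))⁻¹ * aa T u * aa T v := by
        rw [← aa_rel T v u]
      have h3 : v - T v + u = u + v - T v := by abel
      have h4 : cc T (v - T v) u = (aa T (T v))⁻¹ *
          (aa T u * aa T v * (aa T u)⁻¹ * (aa T v)⁻¹) * aa T (T v) := by
        show aa T (v - T v + u) * (aa T u)⁻¹ * (aa T (v - T v))⁻¹ = _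
        rw [h3, h2, h1]
        group
      rw [h4, aa_commutator T u v]
      have hC : Commute ((cc T u v)⁻¹ * cc T v u) (aa T (T v)) :=
        ((cc_comm_aa T u v (T v)).inv_left).mul_left (cc_comm_aa T v u (T v))
      calc (aa T (T v))⁻¹ * ((cc T u v)⁻¹ * cc T v u) * aa T (T v)
          = (aa T (T v))⁻¹ * (((cc T u v)⁻¹ * cc T v u) * aa T (T v)) := by group
        _ = (aa T (T v))⁻¹ * (aa T (T v) * ((cc T u v)⁻¹ * cc T v u)) := by rw [hC.eq]
        _ = (cc T u v)⁻¹ * cc T v u := by group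
    rw [key]
    group


end Clauwens
end

section
/- The set F(M,T) = ℤ × M × S(M,T), equipped with the multiplication (k, x, α)(m, y, β) = (k + m, T^m x + y, α + β + [T^m x ⊗ y]), is a group, with identity (0, 0, 0) and inverse (k, x, α)^{-1} = (−k, −T^{−k} x, −α + [x ⊗ x]). -/
/-!
Common setup: the adjoint group of the Alexander quandle `A(M,T)` (F.J.-B.J. Clauwens,
"The adjoint group of an Alexander quandle").

For an abelian group `M` with automorphism `T`, the Alexander quandle `A(M,T)` is `M` with
`y * x = T y + x - T x`, and the adjoint group `Adj(A(M,T))` is presented with generators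
`e x` for `x : M` and relations `e (y * x) = (e x)⁻¹ * e y * e x`.
-/

open scoped TensorProduct

namespace Clauwens

variable {M : Type*} [AddCommGroup M]

/-- The multiplication `(k, x, α)(m, y, β) = (k + m, T^m x + y, α + β + [T^m x ⊗ y])`
on `ℤ × M × S(M,T)`. -/
noncomputable def fmul (T : M ≃+ M) (g h : ℤ × M × S T) : ℤ × M × S T :=
  (g.1 + h.1, Tz T h.1 g.2.1 + h.2.1, g.2.2 + h.2.2 + cls T (Tz T h.1 g.2.1) h.2.1)

/-- The proposed inverse `(k, x, α)⁻¹ = (-k, -T^{-k} x, -α + [x ⊗ x])`. -/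
noncomputable def finv (T : M ≃+ M) (g : ℤ × M × S T) : ℤ × M × S T :=
  (-g.1, -(Tz T (-g.1) g.2.1), -g.2.2 + cls T g.2.1 g.2.1)

/-- The set `F(M,T) = ℤ × M × S(M,T)` with multiplication
`(k, x, α)(m, y, β) = (k + m, T^m x + y, α + β + [T^m x ⊗ y])` is a group, with
identity `(0, 0, 0)` and inverse `(k, x, α)⁻¹ = (-k, -T^{-k} x, -α + [x ⊗ x])`. -/
theorem statement10 (T : M ≃+ M) :
    (∀ g h k : ℤ × M × S T, fmul T (fmul T g h) k = fmul T g (fmul T h k)) ∧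
    (∀ g : ℤ × M × S T, fmul T ((0 : ℤ), (0 : M), (0 : S T)) g = g) ∧
    (∀ g : ℤ × M × S T, fmul T g ((0 : ℤ), (0 : M), (0 : S T)) = g) ∧
    (∀ g : ℤ × M × S T, fmul T (finv T g) g = ((0 : ℤ), (0 : M), (0 : S T))) ∧
    (∀ g : ℤ × M × S T, fmul T g (finv T g) = ((0 : ℤ), (0 : M), (0 : S T))) := by
  refine ⟨?_, ?_, ?_, ?_, ?_⟩
  · rintro ⟨a, x, α⟩ ⟨b, y, β⟩ ⟨c, z, δ⟩
    refine Prod.ext (add_assoc a b c) (Prod.ext ?_ ?_)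
    · show Tz T c (Tz T b x + y) + z = Tz T (b + c) x + (Tz T c y + z)
      rw [add_comm b c, Tz_add, map_add]; abel
    · show α + β + cls T (Tz T b x) y + δ + cls T (Tz T c (Tz T b x + y)) z
        = α + (β + δ + cls T (Tz T c y) z) + cls T (Tz T (b + c) x) (Tz T c y + z)
      rw [add_comm b c, Tz_add, map_add, cls_add_left, cls_add_right,
        cls_Tz T c (Tz T b x) y]
      abel
  · rintro ⟨a, x, α⟩
    refine Prod.ext (zero_add a) (Prod.ext ?_ ?_)
    · show Tz T a 0 + x = x
      rw [map_zero, zero_add]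
    · show 0 + α + cls T (Tz T a 0) x = α
      rw [map_zero, cls_zero_left, zero_add, add_zero]
  · rintro ⟨a, x, α⟩
    refine Prod.ext (add_zero a) (Prod.ext ?_ ?_)
    · show Tz T 0 x + 0 = x
      rw [Tz_zero, add_zero]
    · show α + 0 + cls T (Tz T 0 x) 0 = α
      rw [cls_zero_right, add_zero, add_zero]
  · rintro ⟨a, x, α⟩
    have hx : Tz T a (Tz T (-a) x) = x := by
      rw [← Tz_add, add_neg_cancel, Tz_zero]
    refine Prod.ext (neg_add_cancel a) (Prod.ext ?_ ?_)
    · show Tz T a (-(Tz T (-a) x)) + x = 0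
      rw [map_neg, hx, neg_add_cancel]
    · show -α + cls T x x + α + cls T (Tz T a (-(Tz T (-a) x))) x = 0
      rw [map_neg, hx, cls_neg_left]; abel
  · rintro ⟨a, x, α⟩
    refine Prod.ext (add_neg_cancel a) (Prod.ext ?_ ?_)
    · show Tz T (-a) x + -(Tz T (-a) x) = 0
      rw [add_neg_cancel]
    · show α + (-α + cls T x x) + cls T (Tz T (-a) x) (-(Tz T (-a) x)) = 0
      have : cls T (Tz T (-a) x) (-(Tz T (-a) x)) = -cls T x x := by
        have hnr : cls T (Tz T (-a) x) (-(Tz T (-a) x))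
            = -cls T (Tz T (-a) x) (Tz T (-a) x) := by
          simp [cls, TensorProduct.tmul_neg, Submodule.Quotient.mk_neg]
        rw [hnr, cls_Tz]
      rw [this]; abel

end Clauwens
end

section
/- There is a group homomorphism φ : Adj(A(M,T)) → F(M,T) with φ(e_x) = (1, x, 0) for every x ∈ M. -/
/-!
Common setup: the adjoint group of the Alexander quandle `A(M,T)` (F.J.-B.J. Clauwens,
"The adjoint group of an Alexander quandle").

For an abelian group `M` with automorphism `T`, the Alexander quandle `A(M,T)` is `M` with
`y * x = T y + x - T x`, and the adjoint group `Adj(A(M,T))` is presented with generators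
`e x` for `x : M` and relations `e (y * x) = (e x)⁻¹ * e y * e x`.
-/

open scoped TensorProduct

namespace Clauwens

variable {M : Type*} [AddCommGroup M]

lemma cls_T_left (T : M ≃+ M) (z x : M) : cls T (T z) x = cls T x z := by
  have h := mk_τmap T (x ⊗ₜ[ℤ] z)
  rw [τmap_tmul] at h
  exact h

/-- There is a group homomorphism `φ : Adj(A(M,T)) → F(M,T)` with `φ(e_x) = (1, x, 0)`
for every `x ∈ M`. -/
theorem statement11 (T : M ≃+ M) :
    ∃ φ : Adj T →* F T, ∀ x : M, φ (e T x) = (((1 : ℤ), x, (0 : S T)) : F T) := by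
  refine ⟨PresentedGroup.toGroup (f := fun x => (((1 : ℤ), x, (0 : S T)) : F T)) ?_,
    fun x => PresentedGroup.toGroup.of ..⟩
  rintro r ⟨x, y, rfl⟩
  simp only [map_mul, map_inv, FreeGroup.lift_apply_of]
  rw [mul_inv_eq_one]
  have hTz1 : ∀ z : M, Tz T 1 z = T z := Tz_one T
  have hcancel : Tz T 1 (Tz T (-1) x) = x := by
    rw [← Tz_add]; norm_num; rfl
  refine Prod.ext ?_ (Prod.ext ?_ ?_)
  · show (1 : ℤ) = -1 + 1 + 1
    norm_num
  · show T y + x - T x = Tz T 1 (Tz T 1 (-(Tz T (-1) x)) + y) + x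
    rw [map_neg, hcancel, map_add, map_neg, hTz1, hTz1]
    abel
  · show (0 : S T) = -(0:S T) + cls T x x + 0 + cls T (Tz T 1 (-(Tz T (-1) x))) y
      + 0 + cls T (Tz T 1 (Tz T 1 (-(Tz T (-1) x)) + y)) x
    rw [map_neg, hcancel, map_add, map_neg, hTz1, hTz1, cls_add_left, cls_neg_left,
      cls_T_left, cls_neg_left, cls_T_left]
    abel

end Clauwens
end

section
/- Assume that 1 − T : M → M is invertible, and let φ : Adj(A(M,T)) → F(M,T) be the isomorphism with φ(e_x) = (1, x, 0). For all u, v ∈ M, the element γ[u ⊗ v]^{-1} := e_{u+v}^{-1} e_u e_0^{-1} e_v of Adj(A(M,T)) satisfies φ(e_{u+v}^{-1} e_u e_0^{-1} e_v) = (0, 0, [u ⊗ v]). -/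
/-!
Common setup: the adjoint group of the Alexander quandle `A(M,T)` (F.J.-B.J. Clauwens,
"The adjoint group of an Alexander quandle").

For an abelian group `M` with automorphism `T`, the Alexander quandle `A(M,T)` is `M` with
`y * x = T y + x - T x`, and the adjoint group `Adj(A(M,T))` is presented with generators
`e x` for `x : M` and relations `e (y * x) = (e x)⁻¹ * e y * e x`.
-/

open scoped TensorProduct

namespace Clauwens

variable {M : Type*} [AddCommGroup M]

lemma F_mul_def (T : M ≃+ M) (a b : ℤ) (x y : M) (α β : S T) :
    ((a, x, α) : F T) * (b, y, β)
      = (a + b, Tz T b x + y, α + β + cls T (Tz T b x) y) := rfl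

lemma F_inv_def (T : M ≃+ M) (a : ℤ) (x : M) (α : S T) :
    ((a, x, α) : F T)⁻¹ = (-a, -(Tz T (-a) x), -α + cls T x x) := rfl

lemma Tz_one_neg_one (T : M ≃+ M) (x : M) : Tz T 1 (Tz T (-1) x) = x := by
  have := Tz_add T 1 (-1) x
  rw [add_neg_cancel, Tz_zero] at this
  exact this.symm

/-- If `1 - T` is invertible and `φ : Adj(A(M,T)) → F(M,T)` is the isomorphism with
`φ(e_x) = (1, x, 0)`, then `φ(e_{u+v}⁻¹ e_u e_0⁻¹ e_v) = (0, 0, [u ⊗ v])` for all `u v ∈ M`. -/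
theorem statement13 (T : M ≃+ M) (hT : Function.Bijective fun x : M => x - T x)
    (φ : Adj T →* F T) (hφ : ∀ x : M, φ (e T x) = (((1 : ℤ), x, (0 : S T)) : F T))
    (u v : M) :
    φ ((e T (u + v))⁻¹ * e T u * (e T 0)⁻¹ * e T v)
      = (((0 : ℤ), (0 : M), cls T u v) : F T) := by
  simp only [map_mul, map_inv, hφ, F_inv_def, F_mul_def, map_zero, map_neg,
    Tz_one_neg_one, Tz_zero, neg_zero, cls_zero_left, cls_zero_right, cls_neg_left,
    add_zero, zero_add, neg_add_cancel, add_neg_cancel]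
  refine Prod.ext (by ring) (Prod.ext (by abel) ?_)
  show cls T (u + v) (u + v) + -cls T (u + v) u + cls T (-(u + v) + u) v = cls T u v
  have h : -(u + v) + u = -v := by abel
  rw [h, cls_neg_left]
  simp only [cls_add_left, cls_add_right]
  abel

end Clauwens
end
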